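/- For a prime p and natural numbers m ≤ n, the binomial coefficient C(n, m) is not divisible by p if and only if every base-p digit of m is less than or equal to the corresponding base-p digit of n (Lucas' theorem criterion); in particular, 3 does not divide C(2^{k+1}, 2^k) if and only if the ternary expansion of 2^k omits the digit 2. -/

import Mathlib

lemma digit_choose_not_dvd {p a b : ℕ} (hp : p.Prime) (ha : a < p) (hb : b ≤ a) :
    ¬ p ∣ Nat.choose a b := by
  intro hd
  have := Nat.choose_mul_factorial_mul_factorial hb
  have : p ∣ Nat.factorial a := this ▸ Dvd.dvd.mul_right (hd.mul_right _) _
  exact absurd ((Nat.Prime.dvd_factorial hp).mp this) (by omega)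

lemma crit (p n m : ℕ) (hp : p.Prime) (h : m ≤ n) :
    ¬ p ∣ Nat.choose n m ↔ ∀ i, m / p ^ i % p ≤ n / p ^ i % p := by
  haveI : Fact p.Prime := ⟨hp⟩
  have hp1 : 1 < p := hp.one_lt
  set a := n + 1 with ha_def
  have han : n < p ^ a := lt_of_lt_of_le (Nat.lt_succ_self n) (Nat.le_of_lt (Nat.lt_pow_self hp1 : a < p ^ a))
  have ham : m < p ^ a := lt_of_le_of_lt h han
  have key := Choose.choose_modEq_prod_range_choose_nat (p := p) han ham
  have hdvd : p ∣ Nat.choose n m ↔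
      p ∣ ∏ i ∈ Finset.range a, Nat.choose (n / p ^ i % p) (m / p ^ i % p) := by
    rw [Nat.dvd_iff_mod_eq_zero, Nat.dvd_iff_mod_eq_zero, key]
  rw [hdvd, Prime.dvd_finset_prod_iff hp.prime]
  constructor
  · intro hne i
    by_contra hlt
    push_neg at hlt
    have hia : i < a := by
      by_contra hia
      push_neg at hia
      have hn0 : n / p ^ i = 0 :=
        Nat.div_eq_of_lt (lt_of_lt_of_le han (Nat.pow_le_pow_right hp.pos hia))
      have hm0 : m / p ^ i = 0 :=
        Nat.div_eq_of_lt (lt_of_lt_of_le ham (Nat.pow_le_pow_right hp.pos hia))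
      simp [hn0, hm0] at hlt
    exact hne ⟨i, Finset.mem_range.mpr hia, by
      rw [Nat.choose_eq_zero_of_lt hlt]; exact dvd_zero p⟩
  · rintro hall ⟨i, _, hdi⟩
    exact digit_choose_not_dvd hp (Nat.mod_lt _ hp.pos) (hall i) hdi


lemma digitD {p : ℕ} (hp : 1 < p) : ∀ (i n : ℕ), (Nat.digits p n).getD i 0 = n / p ^ i % p := by
  intro i
  induction i with
  | zero =>
    intro n
    rcases Nat.eq_zero_or_pos n with h | h
    · simp [h]
    · rw [Nat.digits_def' hp h]; simp
  | succ i ih =>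
    intro n
    rcases Nat.eq_zero_or_pos n with h | h
    · simp [h]
    · rw [Nat.digits_def' hp h]
      simp only [List.getD_cons_succ, ih]
      rw [Nat.div_div_eq_div_mul, pow_succ']

lemma boundA : ∀ (i n : ℕ), (∀ j < i, n / 3 ^ j % 3 ≠ 2) → 2 * (n % 3 ^ i) + 1 ≤ 3 ^ i := by
  intro i
  induction i with
  | zero => intro n _; simp [Nat.mod_one]
  | succ i ih =>
    intro n h
    have ih' := ih n (fun j hj => h j (by omega))
    have hd : n / 3 ^ i % 3 ≠ 2 := h i (by omega)
    have hdlt : n / 3 ^ i % 3 < 3 := Nat.mod_lt _ (by norm_num)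
    have hd1 : n / 3 ^ i % 3 ≤ 1 := by omega
    have hm : n % 3 ^ (i + 1) = n % 3 ^ i + 3 ^ i * (n / 3 ^ i % 3) := Nat.mod_pow_succ
    have hmul : 3 ^ i * (n / 3 ^ i % 3) ≤ 3 ^ i := by
      calc 3 ^ i * (n / 3 ^ i % 3) ≤ 3 ^ i * 1 := Nat.mul_le_mul_left _ hd1
      _ = 3 ^ i := Nat.mul_one _
    have hpow : (3:ℕ) ^ (i + 1) = 3 * 3 ^ i := pow_succ' 3 i
    omega

lemma double_div (i n : ℕ) (hb : 2 * (n % 3 ^ i) + 1 ≤ 3 ^ i) :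
    (2 * n) / 3 ^ i = 2 * (n / 3 ^ i) := by
  have h2 := Nat.div_add_mod n (3 ^ i)
  have h1 : 2 * n = 2 * (n % 3 ^ i) + 3 ^ i * (2 * (n / 3 ^ i)) := by
    calc 2 * n = 2 * (3 ^ i * (n / 3 ^ i) + n % 3 ^ i) := by rw [h2]
    _ = 2 * (n % 3 ^ i) + 3 ^ i * (2 * (n / 3 ^ i)) := by ring
  rw [h1, Nat.add_mul_div_left _ _ (Nat.pow_pos (by norm_num) : 0 < 3 ^ i),
    Nat.div_eq_of_lt (by omega), Nat.zero_add]

lemma part2equiv (n : ℕ) :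
    (∀ i, n / 3 ^ i % 3 ≤ (2 * n) / 3 ^ i % 3) ↔ ∀ i, n / 3 ^ i % 3 ≠ 2 := by
  constructor
  · intro hall
    by_contra hex
    push_neg at hex
    obtain ⟨i, hi⟩ := hex
    have hex2 : ∃ i, n / 3 ^ i % 3 = 2 := ⟨i, hi⟩
    set i0 := Nat.find hex2 with hi0
    have hspec : n / 3 ^ i0 % 3 = 2 := Nat.find_spec hex2
    have hmin : ∀ j < i0, n / 3 ^ j % 3 ≠ 2 := fun j hj => Nat.find_min hex2 hj
    have hb := boundA i0 n hmin
    have hdd := double_div i0 n hb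
    have hthis := hall i0
    rw [hdd, Nat.mul_mod, hspec] at hthis
    norm_num at hthis
  · intro hall i
    have hb := boundA i n (fun j _ => hall j)
    rw [double_div i n hb, Nat.mul_mod]
    have hne := hall i
    have hr : n / 3 ^ i % 3 = 0 ∨ n / 3 ^ i % 3 = 1 := by omega
    rcases hr with hr | hr <;> rw [hr] <;> norm_num

lemma mem_bridge (n : ℕ) : (∀ d ∈ Nat.digits 3 n, d ≠ 2) ↔ ∀ i, n / 3 ^ i % 3 ≠ 2 := by
  simp only [← digitD (by norm_num : (1:ℕ) < 3)]
  constructor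
  · intro h i
    rcases lt_or_ge i (Nat.digits 3 n).length with hl | hl
    · rw [List.getD_eq_getElem _ _ hl]
      exact h _ (List.getElem_mem hl)
    · rw [List.getD_eq_default _ _ hl]; omega
  · intro h d hd
    obtain ⟨i, hi, rfl⟩ := List.mem_iff_getElem.mp hd
    have := h i
    rwa [List.getD_eq_getElem _ _ hi] at this

theorem lucas_criterion_and_central_binomial :
    (∀ (p n m : ℕ), p.Prime → m ≤ n →
        (¬ p ∣ Nat.choose n m ↔
          ∀ i, (Nat.digits p m).getD i 0 ≤ (Nat.digits p n).getD i 0)) ∧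
      ∀ k : ℕ, (¬ 3 ∣ Nat.choose (2 ^ (k + 1)) (2 ^ k) ↔
        ∀ d ∈ Nat.digits 3 (2 ^ k), d ≠ 2) := by
  constructor
  · intro p n m hp h
    simp only [digitD hp.one_lt]
    exact crit p n m hp h
  · intro k
    have h := crit 3 (2 ^ (k + 1)) (2 ^ k) (by norm_num)
      (Nat.pow_le_pow_right (by norm_num) (by omega))
    rw [h]
    have h2 : (2:ℕ) ^ (k + 1) = 2 * 2 ^ k := by ring
    rw [h2, part2equiv, ← mem_bridge]
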